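/- arXiv:1909.07291 — 4 statements merged into one kernel-verified Lean document; each statement's English description precedes it below -/
import Mathlib

section
/- Let A, E : ℝ × ℝ³ → ℝ³ and ψ : ℝ × ℝ³ → ℝ be C² fields, set B = ∇×A (spatial curl), and suppose the un-curled Faraday law ∂A/∂t + E + ∇ψ = 0 holds everywhere. Then the magnetic helicity density h_m = A·B satisfies the transport equation ∂(A·B)/∂t + ∇·(E×A + ψ B) = −2 E·B. -/
noncomputable section

/-- Vectors in ℝ³. -/
abbrev V3 := Fin 3 → ℝ

/-- Euclidean dot product on ℝ³. -/
def dot3 (a b : V3) : ℝ := a 0 * b 0 + a 1 * b 1 + a 2 * b 2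

/-- Cross product on ℝ³. -/
def cross3 (a b : V3) : V3 :=
  ![a 1 * b 2 - a 2 * b 1, a 2 * b 0 - a 0 * b 2, a 0 * b 1 - a 1 * b 0]

/-- Euclidean norm on ℝ³. -/
def norm3 (a : V3) : ℝ := Real.sqrt (dot3 a a)

/-- Spatial partial derivative of a time-dependent scalar field. -/
def pdS (i : Fin 3) (f : ℝ × V3 → ℝ) (p : ℝ × V3) : ℝ :=
  fderiv ℝ (fun x => f (p.1, x)) p.2 (Pi.single i 1)

/-- Spatial gradient of a time-dependent scalar field. -/
def gradS (f : ℝ × V3 → ℝ) (p : ℝ × V3) : V3 := fun i => pdS i f p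

/-- Spatial divergence of a time-dependent vector field. -/
def divS (F : ℝ × V3 → V3) (p : ℝ × V3) : ℝ :=
  pdS 0 (fun q => F q 0) p + pdS 1 (fun q => F q 1) p + pdS 2 (fun q => F q 2) p

/-- Spatial curl of a time-dependent vector field. -/
def curlS (F : ℝ × V3 → V3) (p : ℝ × V3) : V3 :=
  ![pdS 1 (fun q => F q 2) p - pdS 2 (fun q => F q 1) p,
    pdS 2 (fun q => F q 0) p - pdS 0 (fun q => F q 2) p,
    pdS 0 (fun q => F q 1) p - pdS 1 (fun q => F q 0) p]

/-- Time partial derivative of a scalar field. -/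
def dtS (f : ℝ × V3 → ℝ) (p : ℝ × V3) : ℝ := deriv (fun t => f (t, p.2)) p.1

/-- Time partial derivative of a vector field. -/
def dtV (F : ℝ × V3 → V3) (p : ℝ × V3) : V3 := deriv (fun t => F (t, p.2)) p.1

/-- Fluid shear tensor `σ_ij = ½(∂u_i/∂x_j + ∂u_j/∂x_i) − (1/3) δ_ij ∇·u`. -/
def shearS (u : ℝ × V3 → V3) (p : ℝ × V3) : Fin 3 → Fin 3 → ℝ :=
  fun i j => (1 / 2) * (pdS j (fun q => u q i) p + pdS i (fun q => u q j) p)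
    - (1 / 3) * (if i = j then (1 : ℝ) else 0) * divS u p

/-- Matrix–vector product `(m·v)_i = Σ_j m_ij v_j`. -/
def matVec (m : Fin 3 → Fin 3 → ℝ) (v : V3) : V3 := fun i => ∑ j : Fin 3, m i j * v j

/-- Quadratic form `a·m·b = Σ_{i,j} a_i m_ij b_j`. -/
def quad3 (a : V3) (m : Fin 3 → Fin 3 → ℝ) (b : V3) : ℝ :=
  ∑ i : Fin 3, ∑ j : Fin 3, a i * m i j * b j

/-- Directional derivative `(v·∇)F` in the spatial variables. -/
def dirDS (v : V3) (F : ℝ × V3 → V3) (p : ℝ × V3) : V3 :=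
  fun i => v 0 * pdS 0 (fun q => F q i) p + v 1 * pdS 1 (fun q => F q i) p
    + v 2 * pdS 2 (fun q => F q i) p

def ee (i : Fin 3) : ℝ × V3 := (0, Pi.single i 1)
def et : ℝ × V3 := ((1:ℝ), (0:V3))

lemma pdS_fderiv {f : ℝ × V3 → ℝ} {p : ℝ × V3} (hf : DifferentiableAt ℝ f p) (i : Fin 3) :
    pdS i f p = fderiv ℝ f p (ee i) := by
  have h1 : HasFDerivAt (fun x : V3 => (p.1, x)) (ContinuousLinearMap.inr ℝ ℝ V3) p.2 :=
    (hasFDerivAt_const p.1 p.2).prodMk (hasFDerivAt_id p.2)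
  have h2 : HasFDerivAt f (fderiv ℝ f p) (p.1, p.2) := by rw [Prod.mk.eta]; exact hf.hasFDerivAt
  have h3 := (h2.comp p.2 h1).fderiv
  simp only [Function.comp_def] at h3
  simp only [pdS]
  rw [h3]; rfl

lemma dtS_fderiv {f : ℝ × V3 → ℝ} {p : ℝ × V3} (hf : DifferentiableAt ℝ f p) :
    dtS f p = fderiv ℝ f p et := by
  have h1 : HasDerivAt (fun t : ℝ => (t, p.2)) (((1:ℝ), (0:V3)) : ℝ × V3) p.1 :=
    (hasDerivAt_id p.1).prodMk (hasDerivAt_const p.1 p.2)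
  have h2 : HasFDerivAt f (fderiv ℝ f p) (p.1, p.2) := by rw [Prod.mk.eta]; exact hf.hasFDerivAt
  have h3 := (h2.comp_hasDerivAt p.1 h1).deriv
  simp only [Function.comp_def] at h3
  simp only [dtS]
  rw [h3]; rfl

lemma dtV_apply {F : ℝ × V3 → V3} (hF : Differentiable ℝ F) (p : ℝ × V3) (i : Fin 3) :
    dtV F p i = dtS (fun q => F q i) p := by
  have hline : Differentiable ℝ (fun t : ℝ => ((t, p.2) : ℝ × V3)) :=
    (differentiable_id.prodMk (differentiable_const p.2))
  have hg : DifferentiableAt ℝ (fun t : ℝ => F (t, p.2)) p.1 :=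
    (hF.comp hline).differentiableAt
  have h1 := hg.hasDerivAt
  have h2 := ((ContinuousLinearMap.proj (R := ℝ) (φ := fun _ : Fin 3 => ℝ) i).hasFDerivAt.comp_hasDerivAt
    p.1 h1).deriv
  simp only [Function.comp_def] at h2
  simp only [dtV, dtS]
  exact h2.symm

lemma diff_line_t {f : ℝ × V3 → ℝ} (hf : Differentiable ℝ f) (x : V3) :
    Differentiable ℝ (fun t : ℝ => f (t, x)) :=
  hf.comp (differentiable_id.prodMk (differentiable_const x))

lemma diff_line_x {f : ℝ × V3 → ℝ} (hf : Differentiable ℝ f) (t : ℝ) :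
    Differentiable ℝ (fun x : V3 => f (t, x)) :=
  hf.comp ((differentiable_const t).prodMk differentiable_id)

lemma dtS_add {f g : ℝ × V3 → ℝ} (hf : Differentiable ℝ f) (hg : Differentiable ℝ g) (p : ℝ × V3) :
    dtS (fun q => f q + g q) p = dtS f p + dtS g p := by
  simp only [dtS]
  exact deriv_add ((diff_line_t hf p.2) p.1) ((diff_line_t hg p.2) p.1)

lemma dtS_sub {f g : ℝ × V3 → ℝ} (hf : Differentiable ℝ f) (hg : Differentiable ℝ g) (p : ℝ × V3) :
    dtS (fun q => f q - g q) p = dtS f p - dtS g p := by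
  simp only [dtS]
  exact deriv_sub ((diff_line_t hf p.2) p.1) ((diff_line_t hg p.2) p.1)

lemma dtS_mul {f g : ℝ × V3 → ℝ} (hf : Differentiable ℝ f) (hg : Differentiable ℝ g) (p : ℝ × V3) :
    dtS (fun q => f q * g q) p = dtS f p * g p + f p * dtS g p := by
  simp only [dtS]
  have := deriv_fun_mul ((diff_line_t hf p.2) p.1) ((diff_line_t hg p.2) p.1)
  simpa using this

lemma pdS_add {f g : ℝ × V3 → ℝ} (hf : Differentiable ℝ f) (hg : Differentiable ℝ g)
    (i : Fin 3) (p : ℝ × V3) :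
    pdS i (fun q => f q + g q) p = pdS i f p + pdS i g p := by
  simp only [pdS]
  rw [fderiv_fun_add ((diff_line_x hf p.1) p.2) ((diff_line_x hg p.1) p.2)]
  rfl

lemma pdS_sub {f g : ℝ × V3 → ℝ} (hf : Differentiable ℝ f) (hg : Differentiable ℝ g)
    (i : Fin 3) (p : ℝ × V3) :
    pdS i (fun q => f q - g q) p = pdS i f p - pdS i g p := by
  simp only [pdS]
  rw [fderiv_fun_sub ((diff_line_x hf p.1) p.2) ((diff_line_x hg p.1) p.2)]
  rfl

lemma pdS_mul {f g : ℝ × V3 → ℝ} (hf : Differentiable ℝ f) (hg : Differentiable ℝ g)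
    (i : Fin 3) (p : ℝ × V3) :
    pdS i (fun q => f q * g q) p = pdS i f p * g p + f p * pdS i g p := by
  simp only [pdS]
  rw [fderiv_fun_mul ((diff_line_x hf p.1) p.2) ((diff_line_x hg p.1) p.2)]
  simp only [ContinuousLinearMap.add_apply, ContinuousLinearMap.coe_smul', Pi.smul_apply,
    smul_eq_mul]
  ring

lemma fd_fd_apply {f : ℝ × V3 → ℝ} (hf' : Differentiable ℝ (fderiv ℝ f))
    (p v w : ℝ × V3) :
    fderiv ℝ (fun q => fderiv ℝ f q v) p w = fderiv ℝ (fderiv ℝ f) p w v := by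
  have h := fderiv_clm_apply (hf' p) (differentiableAt_const v)
  rw [show (fun q => fderiv ℝ f q v) = (fun q => (fderiv ℝ f q) ((fun _ : ℝ × V3 => v) q)) from rfl,
    h]
  simp

lemma diff_fd_apply {f : ℝ × V3 → ℝ} (hf' : Differentiable ℝ (fderiv ℝ f)) (v : ℝ × V3) :
    Differentiable ℝ (fun q => fderiv ℝ f q v) :=
  (ContinuousLinearMap.apply ℝ ℝ v).differentiable.comp hf'

lemma snd_symm {f : ℝ × V3 → ℝ} (hf : ContDiff ℝ 2 f) (p v w : ℝ × V3) :
    fderiv ℝ (fderiv ℝ f) p v w = fderiv ℝ (fderiv ℝ f) p w v := by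
  have hd : Differentiable ℝ f := hf.differentiable (by norm_num)
  have hf' : Differentiable ℝ (fderiv ℝ f) :=
    (hf.fderiv_right (m := 1) (by norm_num)).differentiable (by norm_num)
  exact second_derivative_symmetric (fun y => (hd y).hasFDerivAt) ((hf' p).hasFDerivAt) v w

lemma dtS_fd {f : ℝ × V3 → ℝ} (hf' : Differentiable ℝ (fderiv ℝ f)) (v : ℝ × V3) (p : ℝ × V3) :
    dtS (fun q => fderiv ℝ f q v) p = fderiv ℝ (fderiv ℝ f) p et v := by
  rw [dtS_fderiv ((diff_fd_apply hf' v) p), fd_fd_apply hf']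

lemma pdS_fd {f : ℝ × V3 → ℝ} (hf' : Differentiable ℝ (fderiv ℝ f)) (v : ℝ × V3)
    (j : Fin 3) (p : ℝ × V3) :
    pdS j (fun q => fderiv ℝ f q v) p = fderiv ℝ (fderiv ℝ f) p (ee j) v := by
  rw [pdS_fderiv ((diff_fd_apply hf' v) p), fd_fd_apply hf']

/-- general magnetic helicity transport equation
`∂(A·B)/∂t + ∇·(E×A + ψ B) = −2 E·B`. -/
theorem magnetic_helicity_transport
    (A E : ℝ × V3 → V3) (ψ : ℝ × V3 → ℝ)
    (hA : ContDiff ℝ 2 A) (hE : ContDiff ℝ 2 E) (hψ : ContDiff ℝ 2 ψ)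
    (B : ℝ × V3 → V3) (hB : ∀ p, B p = curlS A p)
    (hFaraday : ∀ p, dtV A p + E p + gradS ψ p = 0) :
    ∀ p : ℝ × V3,
      dtS (fun q => dot3 (A q) (B q)) p
        + divS (fun q => cross3 (E q) (A q) + ψ q • B q) p
        = -2 * dot3 (E p) (B p) := by
  have hBf : B = fun q => curlS A q := funext hB
  subst hBf
  intro p
  have hAk : ∀ k : Fin 3, ContDiff ℝ 2 (fun q => A q k) := fun k => contDiff_pi.mp hA k
  have hEk : ∀ k : Fin 3, ContDiff ℝ 2 (fun q => E q k) := fun k => contDiff_pi.mp hE k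
  have hAd : ∀ k, Differentiable ℝ (fun q => A q k) := fun k => (hAk k).differentiable (by norm_num)
  have hEd : ∀ k, Differentiable ℝ (fun q => E q k) := fun k => (hEk k).differentiable (by norm_num)
  have hψd : Differentiable ℝ ψ := hψ.differentiable (by norm_num)
  have hA' : ∀ k : Fin 3, Differentiable ℝ (fderiv ℝ (fun q => A q k)) := fun k =>
    ((hAk k).fderiv_right (m := 1) (by norm_num)).differentiable (by norm_num)
  have hψ' : Differentiable ℝ (fderiv ℝ ψ) :=
    (hψ.fderiv_right (m := 1) (by norm_num)).differentiable (by norm_num)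
  have hfdA : ∀ (k : Fin 3) (v : ℝ × V3), Differentiable ℝ (fun q => fderiv ℝ (fun q' => A q' k) q v) :=
    fun k v => diff_fd_apply (hA' k) v
  have hApd : ∀ (k i : Fin 3) (q : ℝ × V3),
      pdS i (fun q' => A q' k) q = fderiv ℝ (fun q' => A q' k) q (ee i) :=
    fun k i q => pdS_fderiv ((hAd k) q) i
  have hEpd : ∀ (k i : Fin 3) (q : ℝ × V3),
      pdS i (fun q' => E q' k) q = fderiv ℝ (fun q' => E q' k) q (ee i) :=
    fun k i q => pdS_fderiv ((hEd k) q) i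
  have hψpd : ∀ (i : Fin 3) (q : ℝ × V3), pdS i ψ q = fderiv ℝ ψ q (ee i) :=
    fun i q => pdS_fderiv (hψd q) i
  simp only [dot3, cross3, curlS, divS, Pi.add_apply, Pi.smul_apply, smul_eq_mul,
    Matrix.cons_val_zero, Matrix.cons_val_one, Matrix.head_cons, Matrix.cons_val_two,
    Matrix.tail_cons]
  simp only [hApd, hEpd, hψpd]
  simp (disch := fun_prop) only [dtS_add, dtS_sub, dtS_mul, pdS_add, pdS_sub, pdS_mul]
  have hAdiff : Differentiable ℝ A := hA.differentiable (by norm_num)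
  have hFarFun : ∀ k : Fin 3, (fun q => fderiv ℝ (fun q' => A q' k) q et)
      = (fun q => -(E q k) - fderiv ℝ ψ q (ee k)) := by
    intro k
    funext q
    have h2 := congrFun (hFaraday q) k
    simp only [Pi.add_apply, Pi.zero_apply, gradS] at h2
    rw [dtV_apply hAdiff q k, dtS_fderiv ((hAd k) q), hψpd k q] at h2
    linarith
  have hFarP : ∀ k : Fin 3, dtS (fun q => A q k) p = -(E p k) - fderiv ℝ ψ p (ee k) := by
    intro k
    rw [dtS_fderiv ((hAd k) p)]
    exact congrFun (hFarFun k) p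
  have hmix : ∀ (k j : Fin 3), fderiv ℝ (fderiv ℝ (fun q => A q k)) p et (ee j)
      = -(fderiv ℝ (fun q => E q k) p (ee j)) - fderiv ℝ (fderiv ℝ ψ) p (ee j) (ee k) := by
    intro k j
    rw [snd_symm (hAk k) p et (ee j), ← fd_fd_apply (hA' k) p et (ee j), hFarFun k]
    have hd1 : DifferentiableAt ℝ (fun q => -(E q k)) p := ((hEd k).neg) p
    have hd2 : DifferentiableAt ℝ (fun q => fderiv ℝ ψ q (ee k)) p := (diff_fd_apply hψ' (ee k)) p
    rw [fderiv_fun_sub hd1 hd2]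
    simp only [ContinuousLinearMap.sub_apply]
    rw [fderiv_fun_neg]
    simp only [ContinuousLinearMap.neg_apply]
    rw [fd_fd_apply hψ' p (ee k) (ee j)]
  simp only [hApd, hEpd, hψpd, hFarP]
  simp only [dtS_fd (hA' 0), dtS_fd (hA' 1), dtS_fd (hA' 2),
    pdS_fd (hA' 0), pdS_fd (hA' 1), pdS_fd (hA' 2)]
  simp only [hmix]
  have s1 : ∀ k : Fin 3, fderiv ℝ (fderiv ℝ (fun q => A q k)) p (ee 1) (ee 0)
      = fderiv ℝ (fderiv ℝ (fun q => A q k)) p (ee 0) (ee 1) := fun k => snd_symm (hAk k) p _ _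
  have s2 : ∀ k : Fin 3, fderiv ℝ (fderiv ℝ (fun q => A q k)) p (ee 2) (ee 0)
      = fderiv ℝ (fderiv ℝ (fun q => A q k)) p (ee 0) (ee 2) := fun k => snd_symm (hAk k) p _ _
  have s3 : ∀ k : Fin 3, fderiv ℝ (fderiv ℝ (fun q => A q k)) p (ee 2) (ee 1)
      = fderiv ℝ (fderiv ℝ (fun q => A q k)) p (ee 1) (ee 2) := fun k => snd_symm (hAk k) p _ _
  have t1 : fderiv ℝ (fderiv ℝ ψ) p (ee 1) (ee 0) = fderiv ℝ (fderiv ℝ ψ) p (ee 0) (ee 1) :=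
    snd_symm hψ p _ _
  have t2 : fderiv ℝ (fderiv ℝ ψ) p (ee 2) (ee 0) = fderiv ℝ (fderiv ℝ ψ) p (ee 0) (ee 2) :=
    snd_symm hψ p _ _
  have t3 : fderiv ℝ (fderiv ℝ ψ) p (ee 2) (ee 1) = fderiv ℝ (fderiv ℝ ψ) p (ee 1) (ee 2) :=
    snd_symm hψ p _ _
  simp only [s1, s2, s3, t1, t2, t3]
  ring
end
end

section
/- Let u, A, η : ℝ × ℝ³ → ℝ³ be C¹ fields and α : ℝ × ℝ³ → ℝ a scalar field, with |A| > 0 and η·A = 0 everywhere. Suppose A satisfies the advected-gauge Faraday equation ∂A/∂t − u×(∇×A) + ∇(u·A) = 0 and η satisfies ∂η/∂t − u×(∇×η) + ∇(u·η) = α A. Then α = 2 (A·σ·η)/|A|², where σ is the shear tensor of u. -/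
noncomputable section

/-- Product rule for the spatial derivative of a dot product. -/
lemma pdS_dot3 (F G : ℝ × V3 → V3) (p : ℝ × V3)
    (hF : ∀ j : Fin 3, DifferentiableAt ℝ (fun x => F (p.1, x) j) p.2)
    (hG : ∀ j : Fin 3, DifferentiableAt ℝ (fun x => G (p.1, x) j) p.2) (i : Fin 3) :
    pdS i (fun q => dot3 (F q) (G q)) p =
      (pdS i (fun q => F q 0) p * G p 0 + F p 0 * pdS i (fun q => G q 0) p)
    + (pdS i (fun q => F q 1) p * G p 1 + F p 1 * pdS i (fun q => G q 1) p)
    + (pdS i (fun q => F q 2) p * G p 2 + F p 2 * pdS i (fun q => G q 2) p) := by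
  set D : V3 →L[ℝ] ℝ :=
    ((F (p.1,p.2) 0 • fderiv ℝ (fun x => G (p.1,x) 0) p.2
        + G (p.1,p.2) 0 • fderiv ℝ (fun x => F (p.1,x) 0) p.2)
      + (F (p.1,p.2) 1 • fderiv ℝ (fun x => G (p.1,x) 1) p.2
        + G (p.1,p.2) 1 • fderiv ℝ (fun x => F (p.1,x) 1) p.2))
      + (F (p.1,p.2) 2 • fderiv ℝ (fun x => G (p.1,x) 2) p.2
        + G (p.1,p.2) 2 • fderiv ℝ (fun x => F (p.1,x) 2) p.2) with hD
  have h : HasFDerivAt (fun x => F (p.1,x) 0 * G (p.1,x) 0 + F (p.1,x) 1 * G (p.1,x) 1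
      + F (p.1,x) 2 * G (p.1,x) 2) D p.2 :=
    ((((hF 0).hasFDerivAt.mul (hG 0).hasFDerivAt).add
      ((hF 1).hasFDerivAt.mul (hG 1).hasFDerivAt)).add
      ((hF 2).hasFDerivAt.mul (hG 2).hasFDerivAt))
  have h2 : pdS i (fun q => dot3 (F q) (G q)) p = D (Pi.single i 1) := by
    unfold pdS
    exact congrFun (congrArg _ h.fderiv) _
  rw [h2, hD]
  simp only [ContinuousLinearMap.add_apply, ContinuousLinearMap.smul_apply, smul_eq_mul]
  unfold pdS
  ring

/-- Differentiability of spatial slices of the components of a C¹ field. -/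
lemma diff_space (F : ℝ × V3 → V3) (hF : ContDiff ℝ 1 F) (t : ℝ) (j : Fin 3) :
    Differentiable ℝ (fun x : V3 => F (t, x) j) :=
  (differentiable_pi.mp (hF.differentiable one_ne_zero) j).comp
    ((differentiable_const t).prodMk differentiable_id)

/-- Differentiability of time slices of the components of a C¹ field. -/
lemma diff_time (F : ℝ × V3 → V3) (hF : ContDiff ℝ 1 F) (x : V3) (j : Fin 3) :
    Differentiable ℝ (fun t : ℝ => F (t, x) j) :=
  (differentiable_pi.mp (hF.differentiable one_ne_zero) j).comp
    (differentiable_id.prodMk (differentiable_const x))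

/-- the coefficient `α` in the Lie-dragging equation for the
Godbillon–Vey one-form is `α = 2(A·σ·η)/|A|²`. -/
theorem godbillon_vey_alpha_formula
    (u A η : ℝ × V3 → V3) (α : ℝ × V3 → ℝ)
    (hu : ContDiff ℝ 1 u) (hA : ContDiff ℝ 1 A) (hη : ContDiff ℝ 1 η)
    (hpos : ∀ p, 0 < norm3 (A p))
    (horth : ∀ p, dot3 (η p) (A p) = 0)
    (hFaraday : ∀ p, dtV A p - cross3 (u p) (curlS A p)
        + gradS (fun q => dot3 (u q) (A q)) p = 0)
    (hηeq : ∀ p, dtV η p - cross3 (u p) (curlS η p)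
        + gradS (fun q => dot3 (u q) (η q)) p = α p • A p) :
    ∀ p : ℝ × V3, α p = 2 * quad3 (A p) (shearS u p) (η p) / norm3 (A p) ^ 2 := by
  intro p
  -- differentiability of slices at the point p
  have hus : ∀ j : Fin 3, DifferentiableAt ℝ (fun x => u (p.1, x) j) p.2 :=
    fun j => (diff_space u hu p.1 j) p.2
  have hAs : ∀ j : Fin 3, DifferentiableAt ℝ (fun x => A (p.1, x) j) p.2 :=
    fun j => (diff_space A hA p.1 j) p.2
  have hηs : ∀ j : Fin 3, DifferentiableAt ℝ (fun x => η (p.1, x) j) p.2 :=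
    fun j => (diff_space η hη p.1 j) p.2
  have hAt : ∀ j : Fin 3, DifferentiableAt ℝ (fun t => A (t, p.2) j) p.1 :=
    fun j => (diff_time A hA p.2 j) p.1
  have hηt : ∀ j : Fin 3, DifferentiableAt ℝ (fun t => η (t, p.2) j) p.1 :=
    fun j => (diff_time η hη p.2 j) p.1
  -- componentwise time derivatives
  have hdtA : dtV A p = fun i => deriv (fun t => A (t, p.2) i) p.1 := deriv_pi hAt
  have hdtη : dtV η p = fun i => deriv (fun t => η (t, p.2) i) p.1 := deriv_pi hηt
  -- A·η vanishes identically
  have hz : ∀ q : ℝ × V3, dot3 (A q) (η q) = 0 := by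
    intro q
    have := horth q
    unfold dot3 at this ⊢
    linarith
  -- time derivative of A·η vanishes, expanded by the product rule
  have hT0 : (deriv (fun t => A (t, p.2) 0) p.1 * η p 0 + A p 0 * deriv (fun t => η (t, p.2) 0) p.1)
      + (deriv (fun t => A (t, p.2) 1) p.1 * η p 1 + A p 1 * deriv (fun t => η (t, p.2) 1) p.1)
      + (deriv (fun t => A (t, p.2) 2) p.1 * η p 2 + A p 2 * deriv (fun t => η (t, p.2) 2) p.1)
      = 0 := by
    have hd : HasDerivAt (fun t => A (t, p.2) 0 * η (t, p.2) 0 + A (t, p.2) 1 * η (t, p.2) 1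
        + A (t, p.2) 2 * η (t, p.2) 2)
        ((deriv (fun t => A (t, p.2) 0) p.1 * η (p.1, p.2) 0
            + A (p.1, p.2) 0 * deriv (fun t => η (t, p.2) 0) p.1)
          + (deriv (fun t => A (t, p.2) 1) p.1 * η (p.1, p.2) 1
            + A (p.1, p.2) 1 * deriv (fun t => η (t, p.2) 1) p.1)
          + (deriv (fun t => A (t, p.2) 2) p.1 * η (p.1, p.2) 2
            + A (p.1, p.2) 2 * deriv (fun t => η (t, p.2) 2) p.1)) p.1 :=
      (((hAt 0).hasDerivAt.mul (hηt 0).hasDerivAt).add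
        ((hAt 1).hasDerivAt.mul (hηt 1).hasDerivAt)).add
        ((hAt 2).hasDerivAt.mul (hηt 2).hasDerivAt)
    have hfun : (fun t => A (t, p.2) 0 * η (t, p.2) 0 + A (t, p.2) 1 * η (t, p.2) 1
        + A (t, p.2) 2 * η (t, p.2) 2) = fun _ => (0 : ℝ) := by
      funext t
      have := hz (t, p.2)
      unfold dot3 at this
      linarith
    have h1 := hd.deriv
    rw [hfun, deriv_const] at h1
    have : A p 0 = A (p.1, p.2) 0 := rfl
    linarith [h1]
  -- spatial derivatives of A·η vanish, expanded by the product rule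
  have hX : ∀ j : Fin 3,
      (pdS j (fun q => A q 0) p * η p 0 + A p 0 * pdS j (fun q => η q 0) p)
      + (pdS j (fun q => A q 1) p * η p 1 + A p 1 * pdS j (fun q => η q 1) p)
      + (pdS j (fun q => A q 2) p * η p 2 + A p 2 * pdS j (fun q => η q 2) p) = 0 := by
    intro j
    have h1 := pdS_dot3 A η p hAs hηs j
    have h2 : pdS j (fun q => dot3 (A q) (η q)) p = 0 := by
      unfold pdS
      have hfun : (fun x => (fun q => dot3 (A q) (η q)) (p.1, x)) = fun _ : V3 => (0 : ℝ) := by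
        funext x
        exact hz (p.1, x)
      rw [hfun, fderiv_fun_const]
      simp
    rw [h2] at h1
    linarith [h1]
  -- Faraday equation, componentwise
  have hF0 := congrFun (hFaraday p) 0
  have hF1 := congrFun (hFaraday p) 1
  have hF2 := congrFun (hFaraday p) 2
  have hE0 := congrFun (hηeq p) 0
  have hE1 := congrFun (hηeq p) 1
  have hE2 := congrFun (hηeq p) 2
  simp only [Pi.add_apply, Pi.sub_apply, Pi.zero_apply, Pi.smul_apply, smul_eq_mul,
    hdtA, hdtη, gradS, cross3, curlS, Matrix.cons_val_zero, Matrix.cons_val_one,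
    Matrix.head_cons, Matrix.cons_val_two, Matrix.tail_cons,
    pdS_dot3 u A p hus hAs, pdS_dot3 u η p hus hηs] at hF0 hF1 hF2 hE0 hE1 hE2
  -- orthogonality at p
  have horthp : η p 0 * A p 0 + η p 1 * A p 1 + η p 2 * A p 2 = 0 := by
    have := horth p
    unfold dot3 at this
    linarith
  -- |A|² is positive
  have hd0 : (0:ℝ) ≤ dot3 (A p) (A p) := by unfold dot3; nlinarith [sq_nonneg (A p 0), sq_nonneg (A p 1), sq_nonneg (A p 2)]
  have hn : norm3 (A p) ^ 2 = dot3 (A p) (A p) := Real.sq_sqrt hd0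
  have hne : dot3 (A p) (A p) ≠ 0 := by
    have := hpos p
    rw [← hn]
    positivity
  rw [eq_div_iff (by rw [hn]; exact hne)]
  rw [hn]
  unfold quad3 shearS divS dot3
  simp only [Fin.sum_univ_three]
  norm_num [Fin.ext_iff]
  linear_combination (-(A p 0)) * hE0 - (A p 1) * hE1 - (A p 2) * hE2
    - (η p 0) * hF0 - (η p 1) * hF1 - (η p 2) * hF2
    + hT0 + (u p 0) * hX 0 + (u p 1) * hX 1 + (u p 2) * hX 2
    + (2/3) * (pdS 0 (fun q => u q 0) p + pdS 1 (fun q => u q 1) p + pdS 2 (fun q => u q 2) p) * horthp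
end
end

section
/- Let ν, λ : ℝ³ → ℝ be C² scalar fields and η₁, η₂ : ℝ³ → ℝ C¹ scalar fields, and set η = η₁ ∇ν + η₂ ∇λ. Then the helicity density of η satisfies η·(∇×η) = (∇ν×∇λ)·( η₂ ∇η₁ − η₁ ∇η₂ ); equivalently, where η₂ ≠ 0, η·(∇×η) = (∇ν×∇λ) · η₂² ∇(η₁/η₂). -/
noncomputable section

/-- Partial derivative of a scalar field in the `i`-th Cartesian direction. -/
def pd (i : Fin 3) (f : V3 → ℝ) (x : V3) : ℝ := fderiv ℝ f x (Pi.single i 1)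

/-- Gradient of a scalar field. -/
def grad3 (f : V3 → ℝ) (x : V3) : V3 := fun i => pd i f x

/-- Divergence of a vector field. -/
def div3 (F : V3 → V3) (x : V3) : ℝ :=
  pd 0 (fun y => F y 0) x + pd 1 (fun y => F y 1) x + pd 2 (fun y => F y 2) x

/-- Curl of a vector field. -/
def curl3 (F : V3 → V3) (x : V3) : V3 :=
  ![pd 1 (fun y => F y 2) x - pd 2 (fun y => F y 1) x,
    pd 2 (fun y => F y 0) x - pd 0 (fun y => F y 2) x,
    pd 0 (fun y => F y 1) x - pd 1 (fun y => F y 0) x]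

/-- Directional derivative `(v·∇)F` of a vector field. -/
def dirD3 (v : V3) (F : V3 → V3) (x : V3) : V3 :=
  fun i => v 0 * pd 0 (fun y => F y i) x + v 1 * pd 1 (fun y => F y i) x
    + v 2 * pd 2 (fun y => F y i) x

-- product rule for pd
lemma pd_mul (f g : V3 → ℝ) (x : V3) (hf : DifferentiableAt ℝ f x)
    (hg : DifferentiableAt ℝ g x) (i : Fin 3) :
    pd i (fun y => f y * g y) x = pd i f x * g x + f x * pd i g x := by
  simp only [pd, fderiv_fun_mul hf hg]
  simp
  ring

lemma pd_add (f g : V3 → ℝ) (x : V3) (hf : DifferentiableAt ℝ f x)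
    (hg : DifferentiableAt ℝ g x) (i : Fin 3) :
    pd i (fun y => f y + g y) x = pd i f x + pd i g x := by
  simp [pd, fderiv_fun_add hf hg]

-- pd i f is C^(n) when f is C^(n+1)
lemma contDiff_pd (f : V3 → ℝ) (hf : ContDiff ℝ 2 f) (i : Fin 3) :
    ContDiff ℝ 1 (pd i f) := by
  have h := hf.fderiv_right (m := 1) le_rfl
  exact h.clm_apply contDiff_const

-- second derivative as pd of pd
lemma pd_pd (f : V3 → ℝ) (hf : ContDiff ℝ 2 f) (x : V3) (j i : Fin 3) :
    pd j (pd i f) x = fderiv ℝ (fderiv ℝ f) x (Pi.single j 1) (Pi.single i 1) := by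
  have hd : DifferentiableAt ℝ (fderiv ℝ f) x :=
    ((hf.fderiv_right (m := 1) le_rfl).differentiable one_ne_zero) x
  have h := hd.hasFDerivAt.clm_apply (hasFDerivAt_const (Pi.single i (1:ℝ)) x)
  have : pd i f = fun y => (fderiv ℝ f y) (Pi.single i 1) := rfl
  rw [pd, this, h.fderiv]
  simp

lemma pd_pd_symm (f : V3 → ℝ) (hf : ContDiff ℝ 2 f) (x : V3) (j i : Fin 3) :
    pd j (pd i f) x = pd i (pd j f) x := by
  rw [pd_pd f hf x j i, pd_pd f hf x i j]
  exact (hf.contDiffAt.isSymmSndFDerivAt (by simp [minSmoothness_of_isRCLikeNormedField])) _ _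

/-- helicity density of a field expanded in the Clebsch basis
`η = η₁∇ν + η₂∇λ`:
`η·(∇×η) = (∇ν×∇λ)·(η₂∇η₁ − η₁∇η₂) = (∇ν×∇λ)·η₂²∇(η₁/η₂)` (where `η₂ ≠ 0`). -/
theorem clebsch_helicity_density
    (ν lam η1 η2 : V3 → ℝ)
    (hν : ContDiff ℝ 2 ν) (hlam : ContDiff ℝ 2 lam)
    (hη1 : ContDiff ℝ 1 η1) (hη2 : ContDiff ℝ 1 η2)
    (η : V3 → V3) (hη : ∀ x, η x = η1 x • grad3 ν x + η2 x • grad3 lam x) :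
    ∀ x : V3,
      dot3 (η x) (curl3 η x)
        = dot3 (cross3 (grad3 ν x) (grad3 lam x))
            (η2 x • grad3 η1 x - η1 x • grad3 η2 x)
      ∧ (η2 x ≠ 0 →
          dot3 (η x) (curl3 η x)
            = dot3 (cross3 (grad3 ν x) (grad3 lam x))
                ((η2 x ^ 2) • grad3 (fun y => η1 y / η2 y) x)) := by
  intro x
  have h1d : DifferentiableAt ℝ η1 x := (hη1.differentiable one_ne_zero) x
  have h2d : DifferentiableAt ℝ η2 x := (hη2.differentiable one_ne_zero) x
  have hνd : ∀ i, DifferentiableAt ℝ (pd i ν) x :=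
    fun i => ((contDiff_pd ν hν i).differentiable one_ne_zero) x
  have hlamd : ∀ i, DifferentiableAt ℝ (pd i lam) x :=
    fun i => ((contDiff_pd lam hlam i).differentiable one_ne_zero) x
  have hcomp : ∀ i : Fin 3, (fun y => η y i) = fun y => η1 y * pd i ν y + η2 y * pd i lam y := by
    intro i; funext y; rw [hη y]; simp [grad3]
  have hpdη : ∀ j i : Fin 3, pd j (fun y => η y i) x =
      pd j η1 x * pd i ν x + η1 x * pd j (pd i ν) x
        + (pd j η2 x * pd i lam x + η2 x * pd j (pd i lam) x) := by
    intro j i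
    rw [hcomp i, pd_add (fun y => η1 y * pd i ν y) (fun y => η2 y * pd i lam y) x (h1d.mul (hνd i)) (h2d.mul (hlamd i)),
      pd_mul _ _ x h1d (hνd i), pd_mul _ _ x h2d (hlamd i)]
  have key : dot3 (η x) (curl3 η x)
      = dot3 (cross3 (grad3 ν x) (grad3 lam x))
          (η2 x • grad3 η1 x - η1 x • grad3 η2 x) := by
    rw [hη x]
    simp only [dot3, cross3, curl3, grad3, hpdη, Pi.add_apply, Pi.smul_apply, Pi.sub_apply,
      smul_eq_mul, Matrix.cons_val_zero, Matrix.cons_val_one, Matrix.head_cons,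
      Matrix.cons_val_two, Matrix.tail_cons]
    rw [pd_pd_symm ν hν x 2 1, pd_pd_symm ν hν x 2 0, pd_pd_symm ν hν x 1 0,
      pd_pd_symm lam hlam x 2 1, pd_pd_symm lam hlam x 2 0, pd_pd_symm lam hlam x 1 0]
    ring
  refine ⟨key, fun h2ne => ?_⟩
  have hpdinv : ∀ i : Fin 3, pd i (fun y => (η2 y)⁻¹) x
      = -((η2 x)⁻¹ * pd i η2 x * (η2 x)⁻¹) := by
    intro i
    have h := (hasFDerivAt_inv' (𝕜 := ℝ) h2ne).comp x h2d.hasFDerivAt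
    rw [Function.comp_def] at h
    rw [pd, h.fderiv]
    simp [pd]
  have hdiv : ∀ i : Fin 3, pd i (fun y => η1 y / η2 y) x
      = pd i η1 x * (η2 x)⁻¹ - η1 x * (pd i η2 x * ((η2 x)⁻¹ * (η2 x)⁻¹)) := by
    intro i
    have : (fun y => η1 y / η2 y) = fun y => η1 y * (η2 y)⁻¹ := by
      funext y; rw [div_eq_mul_inv]
    rw [this, pd_mul η1 (fun y => (η2 y)⁻¹) x h1d (h2d.inv h2ne), hpdinv]
    ring
  rw [key]
  simp only [dot3, grad3, Pi.sub_apply, Pi.smul_apply, smul_eq_mul, hdiv]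
  field_simp
end
end

section
/- Let A : ℝ³ → ℝ³ be a C² vector field with |A| > 0 everywhere, B = ∇×A, and A·B = 0 everywhere. Write A = |A| for the norm, Â = A/A, η = (A×B)/A², η̂ = Â×(∇×Â), λ = (A·∇A)/A³ (where ∇A is the gradient of the scalar |A|). Then η̂·(∇×η̂) = η·(∇×η) + ∇·R, where R = ((B·∇A)/A³) A − 2λ B + λ (∇ln A) × A. Hence the Reinhart–Wood Godbillon–Vey helicity density η̂·(∇×η̂) differs from η·(∇×η) by a pure divergence. -/
noncomputable section

namespace GV

variable {f g : V3 → ℝ} {x : V3} {i j : Fin 3}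

lemma pd_congr (i : Fin 3) (x : V3) (h : ∀ y, f y = g y) : pd i f x = pd i g x := by
  rw [show f = g from funext h]

lemma pd_add (hf : DifferentiableAt ℝ f x) (hg : DifferentiableAt ℝ g x) :
    pd i (fun y => f y + g y) x = pd i f x + pd i g x := by
  simp [pd, fderiv_fun_add hf hg]

lemma pd_neg : pd i (fun y => -f y) x = -pd i f x := by
  simp [pd, fderiv_neg]

lemma pd_sub (hf : DifferentiableAt ℝ f x) (hg : DifferentiableAt ℝ g x) :
    pd i (fun y => f y - g y) x = pd i f x - pd i g x := by
  simp [pd, fderiv_fun_sub hf hg]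

lemma pd_mul (hf : DifferentiableAt ℝ f x) (hg : DifferentiableAt ℝ g x) :
    pd i (fun y => f y * g y) x = pd i f x * g x + f x * pd i g x := by
  simp [pd, fderiv_fun_mul hf hg]; ring

lemma pd_inv (hf : DifferentiableAt ℝ f x) (h0 : f x ≠ 0) :
    pd i (fun y => (f y)⁻¹) x = -((f x) ^ 2)⁻¹ * pd i f x := by
  have h : HasFDerivAt (fun y => (f y)⁻¹) (-((f x)^2)⁻¹ • fderiv ℝ f x) x :=
    (hasDerivAt_inv h0).comp_hasFDerivAt x hf.hasFDerivAt
  simp [pd, h.fderiv]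

lemma pd_log (hf : DifferentiableAt ℝ f x) (h0 : f x ≠ 0) :
    pd i (fun y => Real.log (f y)) x = (f x)⁻¹ * pd i f x := by
  have h : HasFDerivAt (fun y => Real.log (f y)) ((f x)⁻¹ • fderiv ℝ f x) x :=
    (Real.hasDerivAt_log h0).comp_hasFDerivAt x hf.hasFDerivAt
  simp [pd, h.fderiv]

lemma contDiff_pd (hf : ContDiff ℝ 2 f) (j : Fin 3) : ContDiff ℝ 1 (fun y => pd j f y) := by
  have h1 : ContDiff ℝ 1 (fderiv ℝ f) := hf.fderiv_right (m := 1) (by norm_num)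
  exact h1.clm_apply contDiff_const

lemma pd_pd_comm (hf : ContDiff ℝ 2 f) (i j : Fin 3) (x : V3) :
    pd i (fun y => pd j f y) x = pd j (fun y => pd i f y) x := by
  have hd : DifferentiableAt ℝ (fderiv ℝ f) x :=
    ((hf.fderiv_right (m := 1) (by norm_num)).differentiable one_ne_zero).differentiableAt
  have key : ∀ v w : V3, fderiv ℝ (fun y => fderiv ℝ f y v) x w = fderiv ℝ (fderiv ℝ f) x w v := by
    intro v w
    rw [show (fun y => fderiv ℝ f y v) = fun y => (fderiv ℝ f y) ((fun _ => v) y) from rfl,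
      fderiv_clm_apply hd (differentiableAt_const v)]
    simp
  have hsym : IsSymmSndFDerivAt ℝ f x := hf.contDiffAt.isSymmSndFDerivAt (by norm_num)
  simp only [pd]
  rw [key, key, hsym.eq]


lemma vec3_ext {u v : V3} (h0 : u 0 = v 0) (h1 : u 1 = v 1) (h2 : u 2 = v 2) : u = v := by
  funext i
  match i with
  | 0 => exact h0
  | 1 => exact h1
  | 2 => exact h2

def DifV (F : V3 → V3) (x : V3) : Prop := ∀ i, DifferentiableAt ℝ (fun y => F y i) x

variable {F G : V3 → V3}

lemma difV_cross (hF : DifV F x) (hG : DifV G x) :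
    DifV (fun y => cross3 (F y) (G y)) x := by
  intro i; fin_cases i
  · exact ((hF 1).mul (hG 2)).sub ((hF 2).mul (hG 1))
  · exact ((hF 2).mul (hG 0)).sub ((hF 0).mul (hG 2))
  · exact ((hF 0).mul (hG 1)).sub ((hF 1).mul (hG 0))

lemma difV_add (hF : DifV F x) (hG : DifV G x) : DifV (fun y => F y + G y) x :=
  fun i => (hF i).add (hG i)

lemma difV_sub (hF : DifV F x) (hG : DifV G x) : DifV (fun y => F y - G y) x :=
  fun i => (hF i).sub (hG i)

lemma difV_smul (hf : DifferentiableAt ℝ f x) (hF : DifV F x) :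
    DifV (fun y => f y • F y) x := fun i => hf.mul (hF i)

lemma div3_cross (hF : DifV F x) (hG : DifV G x) :
    div3 (fun y => cross3 (F y) (G y)) x
      = dot3 (G x) (curl3 F x) - dot3 (F x) (curl3 G x) := by
  unfold div3
  rw [show (fun y => cross3 (F y) (G y) 0) = fun y => F y 1 * G y 2 - F y 2 * G y 1 from rfl,
    show (fun y => cross3 (F y) (G y) 1) = fun y => F y 2 * G y 0 - F y 0 * G y 2 from rfl,
    show (fun y => cross3 (F y) (G y) 2) = fun y => F y 0 * G y 1 - F y 1 * G y 0 from rfl,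
    pd_sub ((hF 1).fun_mul (hG 2)) ((hF 2).fun_mul (hG 1)),
    pd_sub ((hF 2).fun_mul (hG 0)) ((hF 0).fun_mul (hG 2)),
    pd_sub ((hF 0).fun_mul (hG 1)) ((hF 1).fun_mul (hG 0)),
    pd_mul (hF 1) (hG 2), pd_mul (hF 2) (hG 1), pd_mul (hF 2) (hG 0),
    pd_mul (hF 0) (hG 2), pd_mul (hF 0) (hG 1), pd_mul (hF 1) (hG 0)]
  show _ = dot3 (G x) ![_,_,_] - dot3 (F x) ![_,_,_]
  simp only [dot3, Matrix.cons_val_zero, Matrix.cons_val_one, Matrix.head_cons,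
    Matrix.cons_val_two, Matrix.tail_cons]
  ring

lemma curl3_add (hF : DifV F x) (hG : DifV G x) :
    curl3 (fun y => F y + G y) x = curl3 F x + curl3 G x := by
  have h0 : ∀ k, (fun y => (F y + G y) k) = fun y => F y k + G y k := fun _ => rfl
  refine vec3_ext ?_ ?_ ?_ <;>
  · simp only [curl3, Pi.add_apply, Matrix.cons_val_zero, Matrix.cons_val_one, Matrix.head_cons,
      Matrix.cons_val_two, Matrix.tail_cons, h0]
    rw [pd_add (hF _) (hG _), pd_add (hF _) (hG _)]
    ring

lemma curl3_sub (hF : DifV F x) (hG : DifV G x) :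
    curl3 (fun y => F y - G y) x = curl3 F x - curl3 G x := by
  have h0 : ∀ k, (fun y => (F y - G y) k) = fun y => F y k - G y k := fun _ => rfl
  refine vec3_ext ?_ ?_ ?_ <;>
  · simp only [curl3, Pi.sub_apply, Matrix.cons_val_zero, Matrix.cons_val_one, Matrix.head_cons,
      Matrix.cons_val_two, Matrix.tail_cons, h0]
    rw [pd_sub (hF _) (hG _), pd_sub (hF _) (hG _)]
    ring

lemma curl3_smul (hf : DifferentiableAt ℝ f x) (hF : DifV F x) :
    curl3 (fun y => f y • F y) x = cross3 (grad3 f x) (F x) + f x • curl3 F x := by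
  have h0 : ∀ k, (fun y => (f y • F y) k) = fun y => f y * F y k := fun _ => rfl
  refine vec3_ext ?_ ?_ ?_ <;>
  · simp only [curl3, cross3, grad3, Pi.add_apply, Pi.smul_apply, smul_eq_mul,
      Matrix.cons_val_zero, Matrix.cons_val_one, Matrix.head_cons,
      Matrix.cons_val_two, Matrix.tail_cons, h0]
    rw [pd_mul hf (hF _), pd_mul hf (hF _)]
    ring

lemma curl3_grad (hf : ContDiff ℝ 2 f) : curl3 (fun y => grad3 f y) x = 0 := by
  have h0 : ∀ k, (fun y => grad3 f y k) = fun y => pd k f y := fun _ => rfl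
  refine vec3_ext ?_ ?_ ?_ <;>
  · simp only [curl3, Pi.zero_apply, Matrix.cons_val_zero, Matrix.cons_val_one, Matrix.head_cons,
      Matrix.cons_val_two, Matrix.tail_cons, h0]
    rw [pd_pd_comm hf]
    ring

lemma div3_curl (hF : ∀ i, ContDiff ℝ 2 (fun y => F y i)) :
    div3 (fun y => curl3 F y) x = 0 := by
  have hd : ∀ k j : Fin 3, DifferentiableAt ℝ (fun y => pd k (fun z => F z j) y) x :=
    fun k j => ((contDiff_pd (hF j) k).differentiable one_ne_zero).differentiableAt
  unfold div3
  rw [show (fun y => curl3 F y 0)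
        = fun y => pd 1 (fun z => F z 2) y - pd 2 (fun z => F z 1) y from rfl,
    show (fun y => curl3 F y 1)
        = fun y => pd 2 (fun z => F z 0) y - pd 0 (fun z => F z 2) y from rfl,
    show (fun y => curl3 F y 2)
        = fun y => pd 0 (fun z => F z 1) y - pd 1 (fun z => F z 0) y from rfl,
    pd_sub (hd 1 2) (hd 2 1), pd_sub (hd 2 0) (hd 0 2), pd_sub (hd 0 1) (hd 1 0),
    pd_pd_comm (hF 2) 0 1, pd_pd_comm (hF 1) 0 2, pd_pd_comm (hF 0) 1 2]
  ring

lemma div3_add (hF : DifV F x) (hG : DifV G x) :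
    div3 (fun y => F y + G y) x = div3 F x + div3 G x := by
  unfold div3
  have h0 : ∀ k, (fun y => (F y + G y) k) = fun y => F y k + G y k := fun _ => rfl
  rw [h0, h0, h0, pd_add (hF 0) (hG 0), pd_add (hF 1) (hG 1), pd_add (hF 2) (hG 2)]
  ring

lemma div3_smul (hf : DifferentiableAt ℝ f x) (hF : DifV F x) :
    div3 (fun y => f y • F y) x = dot3 (grad3 f x) (F x) + f x * div3 F x := by
  unfold div3
  have h0 : ∀ k, (fun y => (f y • F y) k) = fun y => f y * F y k := fun _ => rfl
  rw [h0, h0, h0, pd_mul hf (hF 0), pd_mul hf (hF 1), pd_mul hf (hF 2)]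
  simp only [dot3, grad3]
  ring

lemma dot3_add_right (a b c : V3) : dot3 a (b + c) = dot3 a b + dot3 a c := by
  simp [dot3]; ring

lemma dot3_add_left (a b c : V3) : dot3 (a + b) c = dot3 a c + dot3 b c := by
  simp [dot3]; ring

lemma dot3_sub_left (a b c : V3) : dot3 (a - b) c = dot3 a c - dot3 b c := by
  simp [dot3]; ring

lemma dot3_smul_right (r : ℝ) (a b : V3) : dot3 a (r • b) = r * dot3 a b := by
  simp [dot3]; ring

lemma dot3_smul_left (r : ℝ) (a b : V3) : dot3 (r • a) b = r * dot3 a b := by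
  simp [dot3]; ring

lemma dot3_zero_right (a : V3) : dot3 a 0 = 0 := by simp [dot3]

end GV

section Aux

open GV

/-- canonical norm field -/
def Nf (A : V3 → V3) : V3 → ℝ := fun y => norm3 (A y)
/-- canonical curl field -/
def Bc (A : V3 → V3) : V3 → V3 := fun y => curl3 A y
/-- gradient of the norm -/
def GN (A : V3 → V3) : V3 → V3 := fun y => grad3 (Nf A) y
/-- gradient of log of the norm -/
def Glg (A : V3 → V3) : V3 → V3 := fun y => grad3 (fun z => Real.log (Nf A z)) y
/-- canonical Godbillon–Vey field η -/
def Ec (A : V3 → V3) : V3 → V3 := fun y => ((Nf A y) ^ 2)⁻¹ • cross3 (A y) (Bc A y)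
/-- canonical λ -/
def Lc (A : V3 → V3) : V3 → ℝ := fun y => dot3 (A y) (GN A y) / (Nf A y) ^ 3
/-- the correction field w with η̂ = η + w -/
def Wc (A : V3 → V3) : V3 → V3 := fun y => Lc A y • A y - Glg A y

namespace GV

lemma triple1 (a d : V3) : dot3 a (cross3 d a) = 0 := by
  simp only [dot3, cross3, Matrix.cons_val_zero, Matrix.cons_val_one, Matrix.head_cons,
    Matrix.cons_val_two, Matrix.tail_cons]
  ring

lemma triple2 (g d a : V3) : dot3 g (cross3 d a) = - dot3 d (cross3 g a) := by
  simp only [dot3, cross3, Matrix.cons_val_zero, Matrix.cons_val_one, Matrix.head_cons,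
    Matrix.cons_val_two, Matrix.tail_cons]
  ring

lemma triple3 (c : ℝ) (a b : V3) : dot3 (c • cross3 a b) b = 0 := by
  simp only [dot3, cross3, Pi.smul_apply, smul_eq_mul, Matrix.cons_val_zero, Matrix.cons_val_one,
    Matrix.head_cons, Matrix.cons_val_two, Matrix.tail_cons]
  ring

lemma dot3_neg_left (a b : V3) : dot3 (-a) b = - dot3 a b := by
  simp [dot3]; ring

end GV

end Aux


/-- the Reinhart–Wood Godbillon–Vey helicity density
`η̂·(∇×η̂)`, with `η̂ = Â×(∇×Â)`, differs from `η·(∇×η)`, with `η = (A×B)/|A|²`,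
by the pure divergence `∇·R`. -/
theorem reinhart_wood_vs_godbillon_vey
    (A : V3 → V3) (hA : ContDiff ℝ 2 A) (hpos : ∀ x, 0 < norm3 (A x))
    (B Ahat η ηhat R : V3 → V3) (lam : V3 → ℝ)
    (hB : ∀ x, B x = curl3 A x)
    (hAB : ∀ x, dot3 (A x) (B x) = 0)
    (hAhat : ∀ x, Ahat x = (norm3 (A x))⁻¹ • A x)
    (hη : ∀ x, η x = (norm3 (A x) ^ 2)⁻¹ • cross3 (A x) (B x))
    (hηhat : ∀ x, ηhat x = cross3 (Ahat x) (curl3 Ahat x))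
    (hlam : ∀ x, lam x = dot3 (A x) (grad3 (fun y => norm3 (A y)) x) / norm3 (A x) ^ 3)
    (hR : ∀ x, R x =
        (dot3 (B x) (grad3 (fun y => norm3 (A y)) x) / norm3 (A x) ^ 3) • A x
      - (2 * lam x) • B x
      + lam x • cross3 (grad3 (fun y => Real.log (norm3 (A y))) x) (A x)) :
    ∀ x : V3,
      dot3 (ηhat x) (curl3 ηhat x) = dot3 (η x) (curl3 η x) + div3 R x := by
  open GV in
  intro x
  -- basic regularity facts
  have hAc : ∀ i, ContDiff ℝ 2 (fun y => A y i) := fun i => contDiff_pi.mp hA i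
  have hd2 : ∀ y, 0 < dot3 (A y) (A y) := fun y => Real.sqrt_pos.mp (hpos y)
  have hnsq : ∀ y, Nf A y ^ 2 = dot3 (A y) (A y) := fun y => Real.sq_sqrt (hd2 y).le
  have hnne : ∀ y, Nf A y ≠ 0 := fun y => ne_of_gt (hpos y)
  have hm : ∀ y, Nf A y * (Nf A y)⁻¹ = 1 := fun y => mul_inv_cancel₀ (hnne y)
  have hdot : ContDiff ℝ 2 (fun y => dot3 (A y) (A y)) := by
    show ContDiff ℝ 2 fun y => A y 0 * A y 0 + A y 1 * A y 1 + A y 2 * A y 2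
    exact (((hAc 0).mul (hAc 0)).add ((hAc 1).mul (hAc 1))).add ((hAc 2).mul (hAc 2))
  have hN : ContDiff ℝ 2 (Nf A) :=
    contDiff_iff_contDiffAt.mpr fun y => (hdot.contDiffAt).sqrt (hd2 y).ne'
  have hLog : ContDiff ℝ 2 (fun y => Real.log (Nf A y)) :=
    contDiff_iff_contDiffAt.mpr fun y => (hN.contDiffAt).log (hnne y)
  have hNd : Differentiable ℝ (Nf A) := hN.differentiable (by norm_num)
  have hADf : ∀ i, Differentiable ℝ (fun y => A y i) := fun i => (hAc i).differentiable (by norm_num)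
  have hAd : ∀ y, DifV A y := fun y i => (hADf i) y
  have hpdA : ∀ (k j : Fin 3), Differentiable ℝ (fun z => pd k (fun w => A w j) z) := fun k j =>
    (contDiff_pd (hAc j) k).differentiable one_ne_zero
  have hBd : ∀ y, DifV (Bc A) y := by
    intro y i
    match i with
    | 0 => exact ((hpdA 1 2) y).sub ((hpdA 2 1) y)
    | 1 => exact ((hpdA 2 0) y).sub ((hpdA 0 2) y)
    | 2 => exact ((hpdA 0 1) y).sub ((hpdA 1 0) y)
  have hGNf : ∀ i, Differentiable ℝ (fun y => GN A y i) := fun i =>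
    (contDiff_pd hN i).differentiable one_ne_zero
  have hGNd : ∀ y, DifV (GN A) y := fun y i => (hGNf i) y
  have hGLf : ∀ i, Differentiable ℝ (fun y => Glg A y i) := fun i =>
    (contDiff_pd hLog i).differentiable one_ne_zero
  have hGLd : ∀ y, DifV (Glg A) y := fun y i => (hGLf i) y
  have hLcd : Differentiable ℝ (Lc A) := by
    have h1 : Differentiable ℝ (fun y => dot3 (A y) (GN A y)) := by
      show Differentiable ℝ fun y => A y 0 * GN A y 0 + A y 1 * GN A y 1 + A y 2 * GN A y 2
      exact (((hADf 0).mul (hGNf 0)).add ((hADf 1).mul (hGNf 1))).add ((hADf 2).mul (hGNf 2))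
    have h2 : Differentiable ℝ (fun y => (Nf A y ^ 3)⁻¹) :=
      (hNd.pow 3).inv fun y => pow_ne_zero 3 (hnne y)
    have : Lc A = fun y => dot3 (A y) (GN A y) * (Nf A y ^ 3)⁻¹ := by
      funext y; simp only [Lc, div_eq_mul_inv]
    rw [this]
    exact h1.mul h2
  have hEcd : ∀ y, DifV (Ec A) y := by
    intro y
    have hs : Differentiable ℝ (fun z => ((Nf A z) ^ 2)⁻¹) :=
      (hNd.pow 2).inv fun z => pow_ne_zero 2 (hnne z)
    exact difV_smul (hs y) (difV_cross (hAd y) (hBd y))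
  have hWcd : ∀ y, DifV (Wc A) y := fun y => difV_sub (difV_smul (hLcd y) (hAd y)) (hGLd y)
  -- canonicalize the given fields
  have hBF : B = Bc A := funext hB
  subst hBF
  have hηF : η = Ec A := funext fun y => hη y
  subst hηF
  have hlamF : lam = Lc A := funext fun y => hlam y
  subst hlamF
  have hAhat' : Ahat = fun z => (Nf A z)⁻¹ • A z := funext fun y => hAhat y
  have hR' : ∀ y, R y = (dot3 (Bc A y) (GN A y) / Nf A y ^ 3) • A y
      - (2 * Lc A y) • Bc A y + Lc A y • cross3 (Glg A y) (A y) := fun y => hR y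
  -- gradient of log is (1/n) grad n
  have hGLe : ∀ y, Glg A y = (Nf A y)⁻¹ • GN A y := fun y =>
    vec3_ext (pd_log (hNd y) (hnne y)) (pd_log (hNd y) (hnne y)) (pd_log (hNd y) (hnne y))
  -- curl of Ahat
  have hcurlAhat : ∀ y, curl3 Ahat y
      = (Nf A y)⁻¹ • Bc A y + (-((Nf A y)⁻¹ ^ 2)) • cross3 (GN A y) (A y) := by
    intro y
    rw [hAhat', curl3_smul (show DifferentiableAt ℝ (fun z => (Nf A z)⁻¹) y from (hNd y).inv (hnne y)) (hAd y)]
    have hgi : grad3 (fun z => (Nf A z)⁻¹) y = (-((Nf A y) ^ 2)⁻¹) • GN A y :=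
      vec3_ext (pd_inv (hNd y) (hnne y)) (pd_inv (hNd y) (hnne y)) (pd_inv (hNd y) (hnne y))
    rw [hgi, show curl3 A = Bc A from rfl]
    refine vec3_ext ?_ ?_ ?_ <;>
    · simp only [cross3, Pi.add_apply, Pi.smul_apply, smul_eq_mul, Matrix.cons_val_zero,
        Matrix.cons_val_one, Matrix.head_cons, Matrix.cons_val_two, Matrix.tail_cons, ← inv_pow]
      ring
  -- η̂ = η + w
  have hEhat : ηhat = fun y => Ec A y + Wc A y := by
    funext y
    rw [hηhat y, hcurlAhat y, hAhat']
    have hsq' : Nf A y ^ 2 = A y 0 * A y 0 + A y 1 * A y 1 + A y 2 * A y 2 := hnsq y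
    have hm' := hm y
    refine vec3_ext ?_ ?_ ?_ <;>
      simp only [Ec, Wc, Lc, GN, hGLe y, cross3, dot3, Pi.add_apply, Pi.sub_apply,
        Pi.smul_apply, smul_eq_mul, Matrix.cons_val_zero, Matrix.cons_val_one, Matrix.head_cons,
        Matrix.cons_val_two, Matrix.tail_cons, div_eq_mul_inv, ← inv_pow]
    · linear_combination ((Nf A y)⁻¹ ^ 3 * grad3 (Nf A) y 0) * hsq'
        - ((Nf A y)⁻¹ * grad3 (Nf A) y 0 * ((Nf A y)⁻¹ * Nf A y + 1)) * hm'
    · linear_combination ((Nf A y)⁻¹ ^ 3 * grad3 (Nf A) y 1) * hsq'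
        - ((Nf A y)⁻¹ * grad3 (Nf A) y 1 * ((Nf A y)⁻¹ * Nf A y + 1)) * hm'
    · linear_combination ((Nf A y)⁻¹ ^ 3 * grad3 (Nf A) y 2) * hsq'
        - ((Nf A y)⁻¹ * grad3 (Nf A) y 2 * ((Nf A y)⁻¹ * Nf A y + 1)) * hm'
  -- η × A = B
  have hcrossE : ∀ y, cross3 (Ec A y) (A y) = Bc A y := by
    intro y
    have hsq' : Nf A y ^ 2 = A y 0 * A y 0 + A y 1 * A y 1 + A y 2 * A y 2 := hnsq y
    have hab' : A y 0 * Bc A y 0 + A y 1 * Bc A y 1 + A y 2 * Bc A y 2 = 0 := hAB y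
    have hm' := hm y
    refine vec3_ext ?_ ?_ ?_ <;>
      simp only [Ec, cross3, Pi.smul_apply, smul_eq_mul, Matrix.cons_val_zero, Matrix.cons_val_one,
        Matrix.head_cons, Matrix.cons_val_two, Matrix.tail_cons, ← inv_pow]
    · linear_combination (-((Nf A y)⁻¹ ^ 2 * Bc A y 0)) * hsq'
        + (Bc A y 0 * ((Nf A y)⁻¹ * Nf A y + 1)) * hm' + (-((Nf A y)⁻¹ ^ 2 * A y 0)) * hab'
    · linear_combination (-((Nf A y)⁻¹ ^ 2 * Bc A y 1)) * hsq'
        + (Bc A y 1 * ((Nf A y)⁻¹ * Nf A y + 1)) * hm' + (-((Nf A y)⁻¹ ^ 2 * A y 1)) * hab'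
    · linear_combination (-((Nf A y)⁻¹ ^ 2 * Bc A y 2)) * hsq'
        + (Bc A y 2 * ((Nf A y)⁻¹ * Nf A y + 1)) * hm' + (-((Nf A y)⁻¹ ^ 2 * A y 2)) * hab'
  -- A · curl η = 0
  have hAcE : dot3 (A x) (curl3 (Ec A) x) = 0 := by
    have h1 : div3 (fun y => cross3 (Ec A y) (A y)) x
        = dot3 (A x) (curl3 (Ec A) x) - dot3 (Ec A x) (Bc A x) :=
      div3_cross (hEcd x) (hAd x)
    have h2 : (fun y => cross3 (Ec A y) (A y)) = Bc A := funext hcrossE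
    rw [h2] at h1
    have hdivB : div3 (Bc A) x = 0 := div3_curl hAc
    have hF2x : dot3 (Ec A x) (Bc A x) = 0 := triple3 _ _ _
    rw [hdivB, hF2x] at h1
    linarith [h1]
  -- curl of w
  have hcW : curl3 (Wc A) x = cross3 (grad3 (Lc A) x) (A x) + Lc A x • Bc A x := by
    have h1 : curl3 (Wc A) x = curl3 (fun y => Lc A y • A y) x - curl3 (Glg A) x :=
      curl3_sub (difV_smul (hLcd x) (hAd x)) (hGLd x)
    have h2 : curl3 (Glg A) x = 0 := curl3_grad hLog
    have h3 : curl3 (fun y => Lc A y • A y) x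
        = cross3 (grad3 (Lc A) x) (A x) + Lc A x • Bc A x :=
      curl3_smul (hLcd x) (hAd x)
    rw [h1, h2, h3, sub_zero]
  have hc1 : curl3 (fun y => Ec A y + Wc A y) x = curl3 (Ec A) x + curl3 (Wc A) x :=
    curl3_add (hEcd x) (hWcd x)
  have hcurlηhat : curl3 ηhat x
      = curl3 (Ec A) x + (cross3 (grad3 (Lc A) x) (A x) + Lc A x • Bc A x) := by
    rw [hEhat, hc1, hcW]
  have hval : ηhat x = Ec A x + Wc A x := by rw [hEhat]
  -- R as a sum of three divergence-friendly pieces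
  have hRF : R = fun y => cross3 (Glg A y) (Ec A y)
      + ((-(Lc A y)) • Bc A y + Lc A y • cross3 (Glg A y) (A y)) := by
    funext y
    rw [hR' y, hGLe y]
    refine vec3_ext ?_ ?_ ?_ <;>
    · simp only [Ec, Lc, GN, cross3, dot3, Pi.add_apply, Pi.sub_apply, Pi.smul_apply,
        Pi.neg_apply, smul_eq_mul, neg_mul, Matrix.cons_val_zero, Matrix.cons_val_one,
        Matrix.head_cons, Matrix.cons_val_two, Matrix.tail_cons, div_eq_mul_inv, ← inv_pow]
      ring
  -- divergences
  have hP1 : DifV (fun y => cross3 (Glg A y) (Ec A y)) x := difV_cross (hGLd x) (hEcd x)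
  have hP2 : DifV (fun y => (-(Lc A y)) • Bc A y) x := difV_smul (hLcd x).neg (hBd x)
  have hP3 : DifV (fun y => Lc A y • cross3 (Glg A y) (A y)) x :=
    difV_smul (hLcd x) (difV_cross (hGLd x) (hAd x))
  have hdivd : div3 (fun y => cross3 (Glg A y) (Ec A y)
        + ((-(Lc A y)) • Bc A y + Lc A y • cross3 (Glg A y) (A y))) x
      = div3 (fun y => cross3 (Glg A y) (Ec A y)) x
        + (div3 (fun y => (-(Lc A y)) • Bc A y) x
          + div3 (fun y => Lc A y • cross3 (Glg A y) (A y)) x) := by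
    have h1 : div3 (fun y => cross3 (Glg A y) (Ec A y)
          + ((-(Lc A y)) • Bc A y + Lc A y • cross3 (Glg A y) (A y))) x
        = div3 (fun y => cross3 (Glg A y) (Ec A y)) x
          + div3 (fun y => (-(Lc A y)) • Bc A y + Lc A y • cross3 (Glg A y) (A y)) x :=
      div3_add hP1 (difV_add hP2 hP3)
    have h2 : div3 (fun y => (-(Lc A y)) • Bc A y + Lc A y • cross3 (Glg A y) (A y)) x
        = div3 (fun y => (-(Lc A y)) • Bc A y) x
          + div3 (fun y => Lc A y • cross3 (Glg A y) (A y)) x := div3_add hP2 hP3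
    rw [h1, h2]
  have hD1 : div3 (fun y => cross3 (Glg A y) (Ec A y)) x
      = - dot3 (Glg A x) (curl3 (Ec A) x) := by
    rw [div3_cross (hGLd x) (hEcd x)]
    have h2 : curl3 (Glg A) x = 0 := curl3_grad hLog
    rw [h2, dot3_zero_right]
    ring
  have hD2 : div3 (fun y => (-(Lc A y)) • Bc A y) x
      = - dot3 (grad3 (Lc A) x) (Bc A x) := by
    rw [div3_smul (show DifferentiableAt ℝ (fun y => -(Lc A y)) x from (hLcd x).neg) (hBd x)]
    have hdivB : div3 (Bc A) x = 0 := div3_curl hAc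
    have hgneg : grad3 (fun y => -(Lc A y)) x = -grad3 (Lc A) x :=
      vec3_ext pd_neg pd_neg pd_neg
    rw [hgneg, hdivB, dot3_neg_left]
    ring
  have hD3 : div3 (fun y => Lc A y • cross3 (Glg A y) (A y)) x
      = dot3 (grad3 (Lc A) x) (cross3 (Glg A x) (A x))
        - Lc A x * dot3 (Glg A x) (Bc A x) := by
    rw [div3_smul (hLcd x) (difV_cross (hGLd x) (hAd x)), div3_cross (hGLd x) (hAd x)]
    have h2 : curl3 (Glg A) x = 0 := curl3_grad hLog
    rw [h2, dot3_zero_right, show curl3 A = Bc A from rfl]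
    ring
  -- scalar facts at x
  have hsq'' : Nf A x ^ 2 = A x 0 * A x 0 + A x 1 * A x 1 + A x 2 * A x 2 := hnsq x
  have hab'' : A x 0 * Bc A x 0 + A x 1 * Bc A x 1 + A x 2 * Bc A x 2 = 0 := hAB x
  have hm'' := hm x
  have F1 : dot3 (Ec A x) (cross3 (grad3 (Lc A) x) (A x))
      = - dot3 (grad3 (Lc A) x) (Bc A x) := by
    simp only [Ec, dot3, cross3, Pi.smul_apply, smul_eq_mul, Matrix.cons_val_zero,
      Matrix.cons_val_one, Matrix.head_cons, Matrix.cons_val_two, Matrix.tail_cons, ← inv_pow]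
    linear_combination ((Nf A x)⁻¹ ^ 2 * (A x 0 * grad3 (Lc A) x 0 + A x 1 * grad3 (Lc A) x 1
        + A x 2 * grad3 (Lc A) x 2)) * hab''
      + ((Nf A x)⁻¹ ^ 2 * (Bc A x 0 * grad3 (Lc A) x 0 + Bc A x 1 * grad3 (Lc A) x 1
        + Bc A x 2 * grad3 (Lc A) x 2)) * hsq''
      - ((Bc A x 0 * grad3 (Lc A) x 0 + Bc A x 1 * grad3 (Lc A) x 1
        + Bc A x 2 * grad3 (Lc A) x 2) * ((Nf A x)⁻¹ * Nf A x + 1)) * hm''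
  have F2 : dot3 (Ec A x) (Bc A x) = 0 := triple3 _ _ _
  have F4 : dot3 (A x) (cross3 (grad3 (Lc A) x) (A x)) = 0 := triple1 _ _
  have F5 : dot3 (Glg A x) (cross3 (grad3 (Lc A) x) (A x))
      = - dot3 (grad3 (Lc A) x) (cross3 (Glg A x) (A x)) := triple2 _ _ _
  have F6 : dot3 (A x) (Bc A x) = 0 := hAB x
  -- final assembly
  rw [hcurlηhat, hval, hRF, hdivd, hD1, hD2, hD3]
  simp only [Wc, dot3_add_left, dot3_add_right, dot3_sub_left, dot3_smul_left, dot3_smul_right]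
  linear_combination F1 + Lc A x * F2 + Lc A x * hAcE + Lc A x * F4 + Lc A x ^ 2 * F6 - F5
end
end
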